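/- Let a, b, c > 0 and let (U1, U2) have the bivariate generalised beta type I density p(u1,u2) = u1^{a-1} u2^{b-1} (1-u1)^{b+c-1} (1-u2)^{a+c-1} (1-u1 u2)^{-(a+b+c)} · Γ(a+b+c)/(Γ(a)Γ(b)Γ(c)) on (0,1)². Then the marginal density of U1 is the Beta(a, c) density u1^{a-1}(1-u1)^{c-1}/B(a,c). -/

import Mathlib

open MeasureTheory

lemma real_beta_Ioo (p q : ℝ) (hp : 0 < p) (hq : 0 < q) :
    ∫ t in Set.Ioo (0:ℝ) 1, t ^ (p-1) * (1-t) ^ (q-1) =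
      Real.Gamma p * Real.Gamma q / Real.Gamma (p+q) := by
  have hbeta : Complex.betaIntegral (p:ℂ) (q:ℂ) =
      ((∫ t in (0:ℝ)..1, t ^ (p-1) * (1-t) ^ (q-1) : ℝ) : ℂ) := by
    rw [Complex.betaIntegral, ← intervalIntegral.integral_ofReal]
    refine intervalIntegral.integral_congr fun t ht => ?_
    rw [Set.uIcc_of_le (by norm_num : (0:ℝ) ≤ 1)] at ht
    push_cast
    rw [Complex.ofReal_cpow ht.1, Complex.ofReal_cpow (by linarith [ht.2])]
    push_cast
    ring
  have h := Complex.Gamma_mul_Gamma_eq_betaIntegral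
    (s := (p:ℂ)) (t := (q:ℂ)) (by simpa using hp) (by simpa using hq)
  rw [hbeta, ← Complex.ofReal_add, Complex.Gamma_ofReal, Complex.Gamma_ofReal,
    Complex.Gamma_ofReal, ← Complex.ofReal_mul, ← Complex.ofReal_mul] at h
  have h' := Complex.ofReal_inj.mp h
  have hG : Real.Gamma (p+q) ≠ 0 := (Real.Gamma_pos_of_pos (by linarith)).ne'
  have hI : ∫ t in (0:ℝ)..1, t ^ (p-1) * (1-t) ^ (q-1)
      = Real.Gamma p * Real.Gamma q / Real.Gamma (p+q) := by
    field_simp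
    linarith [h']
  rw [← hI, intervalIntegral.integral_of_le (by norm_num : (0:ℝ) ≤ 1),
    integral_Ioc_eq_integral_Ioo]

lemma rpow_collect {A B s t : ℝ} (hA : 0 < A) (hB : 0 < B) (hs : 0 < s) (ht : 0 < t)
    (e1 e2 e3 : ℝ) :
    A / B ^ 2 * ((t / B) ^ e1 * ((s * A / B) ^ e2 * (A / B) ^ e3)) =
      A ^ (1 + e2 + e3) * B ^ (-(2:ℝ) - e1 - e2 - e3) * (s ^ e2 * t ^ e1) := by
  have hA' := hA.ne'
  have hB' := hB.ne'
  have hs' := hs.ne'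
  have ht' := ht.ne'
  rw [Real.div_rpow ht.le hB.le, Real.div_rpow (by positivity) hB.le,
    Real.div_rpow hA.le hB.le, Real.mul_rpow hs.le hA.le,
    Real.rpow_add hA, Real.rpow_add hA, Real.rpow_one,
    show (-(2:ℝ) - e1 - e2 - e3) = (-(2:ℝ)) + (-e1) + (-e2) + (-e3) by ring,
    Real.rpow_add hB, Real.rpow_add hB, Real.rpow_add hB,
    Real.rpow_neg hB.le e1, Real.rpow_neg hB.le e2, Real.rpow_neg hB.le e3,
    Real.rpow_neg hB.le 2, Real.rpow_two]
  field_simp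

theorem stmt_14 (a b c : ℝ) (ha : 0 < a) (hb : 0 < b) (hc : 0 < c)
    (u1 : ℝ) (hu1 : u1 ∈ Set.Ioo (0 : ℝ) 1) :
    ∫ u2 in Set.Ioo (0 : ℝ) 1,
        u1 ^ (a - 1) * u2 ^ (b - 1) * (1 - u1) ^ (b + c - 1) * (1 - u2) ^ (a + c - 1) *
          (1 - u1 * u2) ^ (-(a + b + c)) *
          (Real.Gamma (a + b + c) / (Real.Gamma a * Real.Gamma b * Real.Gamma c)) =
      u1 ^ (a - 1) * (1 - u1) ^ (c - 1) /
        (Real.Gamma a * Real.Gamma c / Real.Gamma (a + c)) := by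
  obtain ⟨hx0, hx1⟩ := hu1
  have h1x : 0 < 1 - u1 := by linarith
  set u1 := u1 with hxdef
  -- the substitution
  set f : ℝ → ℝ := fun s => (1 - s) / (1 - u1 * s) with hf
  have hden : ∀ s ∈ Set.Ioo (0:ℝ) 1, 0 < 1 - u1 * s := by
    intro s hs
    nlinarith [hs.1, hs.2]
  have hmem : ∀ s ∈ Set.Ioo (0:ℝ) 1, f s ∈ Set.Ioo (0:ℝ) 1 := by
    intro s hs
    have h1 := hden s hs
    constructor
    · exact div_pos (by linarith [hs.2]) h1
    · rw [div_lt_one h1]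
      nlinarith [hs.1]
  have hcomp1 : ∀ s ∈ Set.Ioo (0:ℝ) 1, 1 - f s = s * (1 - u1) / (1 - u1 * s) := by
    intro s hs
    have h1 := (hden s hs).ne'
    rw [show f s = (1 - s) / (1 - u1 * s) from rfl]
    rw [eq_div_iff h1, sub_mul, div_mul_cancel₀ _ h1]
    ring
  have hcomp2 : ∀ s ∈ Set.Ioo (0:ℝ) 1, 1 - u1 * f s = (1 - u1) / (1 - u1 * s) := by
    intro s hs
    have h1 := (hden s hs).ne'
    rw [show f s = (1 - s) / (1 - u1 * s) from rfl]
    field_simp [hf]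
    ring
  have hinv : ∀ s ∈ Set.Ioo (0:ℝ) 1, f (f s) = s := by
    intro s hs
    have h1 := (hden s hs).ne'
    have h2 : 1 - u1 * f s = (1 - u1) / (1 - u1 * s) := hcomp2 s hs
    have h3 : 1 - f s = s * (1 - u1) / (1 - u1 * s) := hcomp1 s hs
    rw [show f (f s) = (1 - f s) / (1 - u1 * f s) from rfl, h2, h3]
    have h4 : (1 - u1) ≠ 0 := h1x.ne'
    field_simp
    exact mul_div_cancel_right₀ s (by rwa [mul_comm] at h1)
  have hinj : Set.InjOn f (Set.Ioo 0 1) := by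
    intro s hs t ht h
    rw [← hinv s hs, ← hinv t ht, h]
  have himg : f '' Set.Ioo 0 1 = Set.Ioo (0:ℝ) 1 := by
    apply Set.Subset.antisymm
    · rintro y ⟨s, hs, rfl⟩
      exact hmem s hs
    · intro y hy
      exact ⟨f y, hmem y hy, hinv y hy⟩
  have hderiv : ∀ s ∈ Set.Ioo (0:ℝ) 1,
      HasDerivWithinAt f ((u1 - 1) / (1 - u1 * s) ^ 2) (Set.Ioo 0 1) s := by
    intro s hs
    have h1 := (hden s hs).ne'
    have := (((hasDerivAt_id s).const_sub 1).div
      (((hasDerivAt_id s).const_mul u1).const_sub 1) h1)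
    refine this.hasDerivWithinAt.congr_deriv ?_
    simp only [id]
    ring
  -- main integral computation
  have key : (∫ u2 in Set.Ioo (0:ℝ) 1,
        u2 ^ (b-1) * (1 - u2) ^ (a+c-1) * (1 - u1 * u2) ^ (-(a+b+c)))
      = (1 - u1) ^ (-b) * (Real.Gamma (a+c) * Real.Gamma b / Real.Gamma (a+c+b)) := by
    rw [← himg, integral_image_eq_integral_abs_deriv_smul measurableSet_Ioo hderiv hinj]
    have hcongr : ∀ s ∈ Set.Ioo (0:ℝ) 1,
        |(u1 - 1) / (1 - u1 * s) ^ 2| •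
          ((f s) ^ (b-1) * (1 - f s) ^ (a+c-1) * (1 - u1 * f s) ^ (-(a+b+c)))
        = (1 - u1) ^ (-b) * (s ^ (a+c-1) * (1 - s) ^ (b-1)) := by
      intro s hs
      have hB := hden s hs
      have hs0 := hs.1
      have hs1 : 0 < 1 - s := by linarith [hs.2]
      rw [smul_eq_mul, hcomp1 s hs, hcomp2 s hs,
        show f s = (1 - s) / (1 - u1 * s) from rfl,
        abs_div, abs_of_neg (by linarith : u1 - 1 < 0), abs_of_pos (by positivity : (0:ℝ) < (1 - u1*s)^2),
        show -(u1-1) = 1 - u1 by ring, mul_assoc,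
        rpow_collect h1x hB hs0 hs1 (b-1) (a+c-1) (-(a+b+c)),
        show 1 + (a+c-1) + -(a+b+c) = -b by ring,
        show -(2:ℝ) - (b-1) - (a+c-1) - -(a+b+c) = 0 by ring,
        Real.rpow_zero, mul_one]
    rw [setIntegral_congr_fun measurableSet_Ioo hcongr, MeasureTheory.integral_const_mul _ _,
      real_beta_Ioo (a+c) b (by linarith) hb]
  -- put it together
  have hsplit : ∀ u2 : ℝ,
      u1 ^ (a - 1) * u2 ^ (b - 1) * (1 - u1) ^ (b + c - 1) * (1 - u2) ^ (a + c - 1) *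
          (1 - u1 * u2) ^ (-(a + b + c)) *
          (Real.Gamma (a + b + c) / (Real.Gamma a * Real.Gamma b * Real.Gamma c))
      = (u1 ^ (a - 1) * (1 - u1) ^ (b + c - 1) *
          (Real.Gamma (a + b + c) / (Real.Gamma a * Real.Gamma b * Real.Gamma c))) *
        (u2 ^ (b-1) * (1 - u2) ^ (a+c-1) * (1 - u1 * u2) ^ (-(a+b+c))) := by
    intro u2
    ring
  simp_rw [hsplit]
  rw [MeasureTheory.integral_const_mul _ _, key]
  have hGa := (Real.Gamma_pos_of_pos ha).ne'
  have hGb := (Real.Gamma_pos_of_pos hb).ne'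
  have hGc := (Real.Gamma_pos_of_pos hc).ne'
  have hGac := (Real.Gamma_pos_of_pos (by linarith : (0:ℝ) < a + c)).ne'
  have hGabc := (Real.Gamma_pos_of_pos (by linarith : (0:ℝ) < a + b + c)).ne'
  have hpow : (1 - u1) ^ (b + c - 1) * (1 - u1) ^ (-b) = (1 - u1) ^ (c - 1) := by
    rw [← Real.rpow_add h1x]
    ring_nf
  rw [show a + c + b = a + b + c by ring]
  field_simp
  linear_combination hpow
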